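/- Let q be an odd prime power, d ≥ 2, and E ⊆ 𝔽_q^d with |E| > 12·q^{(d+3)/2}. Suppose t_1, …, t_k ∈ 𝔽_q are all nonzero and k < |E|/(12q). Then ν_k(t⃗) > 0; that is, there exist x ∈ E and pairwise distinct x^1, …, x^k ∈ E with ‖x − x^i‖ = t_i for all 1 ≤ i ≤ k. -/

import Mathlib

open Finset

lemma hyper {F : Type} [Field F] [Fintype F] [DecidableEq F] {d : ℕ} (hd : 1 ≤ d)
    (a : Fin d → F) (ha : ∃ j, a j ≠ 0) (b : F) :
    ((Finset.univ : Finset (Fin d → F)).filter (fun x => ∑ j, a j * x j = b)).card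
      = Fintype.card F ^ (d - 1) := by
  classical
  obtain ⟨j, hj⟩ := ha
  set q := Fintype.card F with hq
  have key : ∀ b : F, ((Finset.univ : Finset (Fin d → F)).filter
      (fun x => ∑ j, a j * x j = b)).card
      = ((Finset.univ : Finset (Fin d → F)).filter (fun x => ∑ j, a j * x j = 0)).card := by
    intro c
    set x0 : Fin d → F := fun m => if m = j then c * (a j)⁻¹ else 0 with hx0
    have hφ0 : ∑ m, a m * x0 m = c := by
      rw [Finset.sum_eq_single j]
      · simp only [hx0, if_pos rfl]
        field_simp
      · intro m _ hm; simp [hx0, hm]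
      · simp
    apply Finset.card_bij' (i := fun x _ => x - x0) (j := fun x _ => x + x0)
    · intro x hx
      simp only [Finset.mem_filter, Finset.mem_univ, true_and, Pi.sub_apply] at hx ⊢
      have h2 : ∑ m, a m * (x m - x0 m) = (∑ m, a m * x m) - ∑ m, a m * x0 m := by
        rw [← Finset.sum_sub_distrib]; congr 1; ext m; ring
      rw [h2, hx, hφ0, sub_self]
    · intro x hx
      simp only [Finset.mem_filter, Finset.mem_univ, true_and, Pi.add_apply] at hx ⊢
      have h2 : ∑ m, a m * (x m + x0 m) = (∑ m, a m * x m) + ∑ m, a m * x0 m := by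
        rw [← Finset.sum_add_distrib]; congr 1; ext m; ring
      rw [h2, hx, hφ0, zero_add]
    · intro x _; ext m; simp
    · intro x _; ext m; simp
  have part : (Finset.univ : Finset (Fin d → F)).card
      = ∑ c : F, ((Finset.univ : Finset (Fin d → F)).filter (fun x => ∑ j, a j * x j = c)).card :=
    Finset.card_eq_sum_card_fiberwise (fun x _ => Finset.mem_univ _)
  have hcardV : (Finset.univ : Finset (Fin d → F)).card = q ^ d := by
    simp [hq, Fintype.card_fun]
  rw [hcardV] at part
  have hmain : q ^ d = q * ((Finset.univ : Finset (Fin d → F)).filter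
      (fun x => ∑ j, a j * x j = 0)).card := by
    rw [part, Finset.sum_congr rfl (fun c _ => key c)]
    simp [mul_comm]
    exact Or.inl hq.symm
  rw [key b]
  have hq1 : q ^ d = q * q ^ (d - 1) := by
    have h1 : d - 1 + 1 = d := Nat.succ_pred_eq_of_pos hd
    nth_rewrite 1 [← h1]
    rw [pow_succ, mul_comm]
  have h2 : q * q ^ (d - 1) = q * ((Finset.univ : Finset (Fin d → F)).filter
      (fun x => ∑ j, a j * x j = 0)).card := hq1.symm.trans hmain
  exact (Nat.eq_of_mul_eq_mul_left Fintype.card_pos h2).symm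


lemma middist {F : Type} [Field F] [Fintype F] [DecidableEq F] {d : ℕ} (hd : 1 ≤ d)
    (h2 : (2 : F) ≠ 0) (y y' : Fin d → F) (hne : y ≠ y') :
    ((Finset.univ : Finset (Fin d → F)).filter
      (fun x => ∑ j, (x j - y j) ^ 2 = ∑ j, (x j - y' j) ^ 2)).card
      = Fintype.card F ^ (d - 1) := by
  have key : ∀ x : Fin d → F,
      (∑ j, (x j - y j) ^ 2 = ∑ j, (x j - y' j) ^ 2)
        ↔ (∑ j, (2 * (y' j - y j)) * x j = ∑ j, (y' j ^ 2 - y j ^ 2)) := by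
    intro x
    rw [← sub_eq_zero, ← sub_eq_zero (a := ∑ j, (2 * (y' j - y j)) * x j),
      ← Finset.sum_sub_distrib, ← Finset.sum_sub_distrib]
    constructor
    · intro h; rw [← h]; apply Finset.sum_congr rfl; intro j _; ring
    · intro h; rw [← h]; apply Finset.sum_congr rfl; intro j _; ring
  rw [Finset.filter_congr (fun x _ => key x)]
  apply hyper hd
  · have : ∃ j, y j ≠ y' j := by
      by_contra hc
      push_neg at hc
      exact hne (funext hc)
    obtain ⟨j, hj⟩ := this
    exact ⟨j, mul_ne_zero h2 (sub_ne_zero.mpr (Ne.symm hj))⟩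

lemma sumsq {F : Type} [Field F] [Fintype F] [DecidableEq F] {d : ℕ} (hd : 1 ≤ d)
    (h2 : (2 : F) ≠ 0) (E : Finset (Fin d → F)) :
    ∑ x : Fin d → F, ∑ t : F,
        ((E.filter (fun z => ∑ j, (x j - z j) ^ 2 = t)).card) ^ 2
      ≤ E.card * Fintype.card F ^ d + E.card ^ 2 * Fintype.card F ^ (d - 1) := by
  classical
  set q := Fintype.card F with hq
  -- Step A : for each x the inner sum counts pairs at equal distance
  have stepA : ∀ x : Fin d → F,
      ∑ t : F, ((E.filter (fun z => ∑ j, (x j - z j) ^ 2 = t)).card) ^ 2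
        = ((E ×ˢ E).filter
            (fun p => ∑ j, (x j - p.1 j) ^ 2 = ∑ j, (x j - p.2 j) ^ 2)).card := by
    intro x
    set g : (Fin d → F) → F := fun z => ∑ j, (x j - z j) ^ 2 with hg
    have h1 : ((E ×ˢ E).filter (fun p => g p.1 = g p.2)).card
        = ∑ t : F, (((E ×ˢ E).filter (fun p => g p.1 = g p.2)).filter
            (fun p => g p.1 = t)).card :=
      Finset.card_eq_sum_card_fiberwise (fun p _ => Finset.mem_univ _)
    rw [h1]
    apply Finset.sum_congr rfl
    intro s _
    have h3 : ((E ×ˢ E).filter (fun p => g p.1 = g p.2)).filter (fun p => g p.1 = s)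
        = (E ×ˢ E).filter (fun p => g p.1 = s ∧ g p.2 = s) := by
      rw [Finset.filter_filter]
      apply Finset.filter_congr
      intro p _
      constructor
      · rintro ⟨hab, hat⟩; exact ⟨hat, hat ▸ hab.symm⟩
      · rintro ⟨hat, hbt⟩; exact ⟨hat.trans hbt.symm, hat⟩
    rw [h3, Finset.filter_product (fun z => g z = s) (fun z => g z = s),
      Finset.card_product]
    rw [sq]
  -- rewrite using Step A and swap the summation order
  calc ∑ x : Fin d → F, ∑ t : F,
        ((E.filter (fun z => ∑ j, (x j - z j) ^ 2 = t)).card) ^ 2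
      = ∑ x : Fin d → F, ((E ×ˢ E).filter
          (fun p => ∑ j, (x j - p.1 j) ^ 2 = ∑ j, (x j - p.2 j) ^ 2)).card :=
        Finset.sum_congr rfl (fun x _ => stepA x)
    _ = ∑ x : Fin d → F, ∑ p ∈ E ×ˢ E,
          (if ∑ j, (x j - p.1 j) ^ 2 = ∑ j, (x j - p.2 j) ^ 2 then 1 else 0) := by
        apply Finset.sum_congr rfl; intro x _; rw [Finset.card_filter]
    _ = ∑ p ∈ E ×ˢ E, ∑ x : Fin d → F,
          (if ∑ j, (x j - p.1 j) ^ 2 = ∑ j, (x j - p.2 j) ^ 2 then 1 else 0) :=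
        Finset.sum_comm
    _ = ∑ p ∈ E ×ˢ E, ((Finset.univ : Finset (Fin d → F)).filter
          (fun x => ∑ j, (x j - p.1 j) ^ 2 = ∑ j, (x j - p.2 j) ^ 2)).card := by
        apply Finset.sum_congr rfl; intro p _; rw [Finset.card_filter]
    _ ≤ E.card * q ^ d + E.card ^ 2 * q ^ (d - 1) := by
        have hsplit : ∀ p ∈ E ×ˢ E,
            ((Finset.univ : Finset (Fin d → F)).filter
              (fun x => ∑ j, (x j - p.1 j) ^ 2 = ∑ j, (x j - p.2 j) ^ 2)).card
            = if p.1 = p.2 then q ^ d else q ^ (d - 1) := by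
          intro p _
          by_cases hp : p.1 = p.2
          · rw [if_pos hp, hp]
            simp [Finset.filter_true_of_mem, hq, Fintype.card_fun]
          · rw [if_neg hp, middist hd h2 p.1 p.2 hp, hq]
        rw [Finset.sum_congr rfl hsplit, Finset.sum_ite]
        have hdiag : ((E ×ˢ E).filter (fun p => p.1 = p.2)).card ≤ E.card := by
          apply Finset.card_le_card_of_injOn (fun p => p.1)
          · intro p hp
            simp only [Finset.mem_coe, Finset.mem_filter, Finset.mem_product] at hp
            exact hp.1.1
          · intro p hp p' hp' hpp
            simp only [Finset.coe_filter, Set.mem_setOf_eq, Finset.mem_product] at hp hp'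
            have h1 : p.1 = p'.1 := hpp
            exact Prod.ext h1 (by rw [← hp.2, ← hp'.2, h1])
        have hoff : ((E ×ˢ E).filter (fun p => ¬ p.1 = p.2)).card ≤ E.card ^ 2 := by
          calc ((E ×ˢ E).filter (fun p => ¬ p.1 = p.2)).card ≤ (E ×ˢ E).card :=
                Finset.card_filter_le _ _
            _ = E.card ^ 2 := by rw [Finset.card_product, sq]
        simp only [Finset.sum_const, smul_eq_mul]
        calc ((E ×ˢ E).filter (fun p => p.1 = p.2)).card * q ^ d
              + ((E ×ˢ E).filter (fun p => ¬ p.1 = p.2)).card * q ^ (d - 1)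
            ≤ E.card * q ^ d + E.card ^ 2 * q ^ (d - 1) := by
              apply Nat.add_le_add
              · exact Nat.mul_le_mul_right _ hdiag
              · exact Nat.mul_le_mul_right _ hoff


lemma ident1_nat {F : Type} [Field F] [Fintype F] [DecidableEq F] {d : ℕ}
    (E : Finset (Fin d → F)) (x : Fin d → F) :
    ∑ s : F, (E.filter (fun z => ∑ j, (x j - z j) ^ 2 = s)).card = E.card := by
  calc ∑ s : F, (E.filter (fun z => ∑ j, (x j - z j) ^ 2 = s)).card
      = ∑ s : F, ∑ z ∈ E, if (∑ j, (x j - z j) ^ 2) = s then 1 else 0 := by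
        apply Finset.sum_congr rfl; intro s _; rw [Finset.card_filter]
    _ = ∑ z ∈ E, ∑ s : F, if (∑ j, (x j - z j) ^ 2) = s then 1 else 0 := Finset.sum_comm
    _ = ∑ _z ∈ E, 1 := by
        apply Finset.sum_congr rfl; intro z _
        rw [Finset.sum_ite_eq Finset.univ (∑ j, (x j - z j) ^ 2) (fun _ => 1)]
        simp
    _ = E.card := by simp


lemma claim_aux {F : Type} [Field F] [Fintype F] [DecidableEq F] {d : ℕ} (hd : 1 ≤ d)
    (h2 : (2 : F) ≠ 0) (k : ℕ) (E : Finset (Fin d → F))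
    (hE : 12 * (Fintype.card F : ℝ) ^ (((d : ℝ) + 3) / 2) < (E.card : ℝ))
    (hk : (k : ℝ) < (E.card : ℝ) / (12 * (Fintype.card F : ℝ))) :
    ∃ x ∈ E, ∀ s : F, k < (E.filter (fun z => ∑ j, (x j - z j) ^ 2 = s)).card := by
  by_contra hcon
  push_neg at hcon
  have hqpos : 0 < Fintype.card F := Fintype.card_pos
  have hq0 : (0 : ℝ) < (Fintype.card F : ℝ) := by exact_mod_cast hqpos
  have hq1le : (1 : ℝ) ≤ (Fintype.card F : ℝ) := by exact_mod_cast hqpos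
  have hA : (0 : ℝ) < (Fintype.card F : ℝ) ^ (((d : ℝ) + 3) / 2) :=
    Real.rpow_pos_of_pos hq0 _
  have hNpos : (0 : ℝ) < (E.card : ℝ) := lt_trans (by positivity) hE
  have hqk12 : 12 * ((Fintype.card F : ℝ) * (k : ℝ)) < (E.card : ℝ) := by
    have h12q : (0 : ℝ) < 12 * (Fintype.card F : ℝ) := by positivity
    have := (lt_div_iff₀ h12q).mp hk
    nlinarith
  have ident1 : ∀ x : Fin d → F,
      ∑ s : F, ((E.filter (fun z => ∑ j, (x j - z j) ^ 2 = s)).card : ℝ) = (E.card : ℝ) := by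
    intro x
    exact_mod_cast ident1_nat E x
  have expand : ∀ x : Fin d → F,
      ∑ s : F, ((Fintype.card F : ℝ) *
          ((E.filter (fun z => ∑ j, (x j - z j) ^ 2 = s)).card : ℝ) - (E.card : ℝ)) ^ 2
        = (Fintype.card F : ℝ) ^ 2 *
            (∑ s : F, ((E.filter (fun z => ∑ j, (x j - z j) ^ 2 = s)).card : ℝ) ^ 2)
          - (Fintype.card F : ℝ) * (E.card : ℝ) ^ 2 := by
    intro x
    have e1 : ∑ s : F, ((Fintype.card F : ℝ) *
          ((E.filter (fun z => ∑ j, (x j - z j) ^ 2 = s)).card : ℝ) - (E.card : ℝ)) ^ 2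
        = ∑ s : F, ((Fintype.card F : ℝ) ^ 2 *
            ((E.filter (fun z => ∑ j, (x j - z j) ^ 2 = s)).card : ℝ) ^ 2
          - 2 * (Fintype.card F : ℝ) * (E.card : ℝ) *
            ((E.filter (fun z => ∑ j, (x j - z j) ^ 2 = s)).card : ℝ) + (E.card : ℝ) ^ 2) :=
      Finset.sum_congr rfl (fun s _ => by ring)
    rw [e1, Finset.sum_add_distrib, Finset.sum_sub_distrib, ← Finset.mul_sum,
      ← Finset.mul_sum, ident1 x, Finset.sum_const, Finset.card_univ, nsmul_eq_mul]
    ring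
  have hsqR : (∑ x : Fin d → F, ∑ s : F,
        ((E.filter (fun z => ∑ j, (x j - z j) ^ 2 = s)).card : ℝ) ^ 2)
      ≤ (E.card : ℝ) * (Fintype.card F : ℝ) ^ d
        + (E.card : ℝ) ^ 2 * (Fintype.card F : ℝ) ^ (d - 1) := by
    exact_mod_cast sumsq hd h2 E
  have hT : ∑ x : Fin d → F, ∑ s : F, ((Fintype.card F : ℝ) *
        ((E.filter (fun z => ∑ j, (x j - z j) ^ 2 = s)).card : ℝ) - (E.card : ℝ)) ^ 2
      = (Fintype.card F : ℝ) ^ 2 * (∑ x : Fin d → F, ∑ s : F,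
          ((E.filter (fun z => ∑ j, (x j - z j) ^ 2 = s)).card : ℝ) ^ 2)
        - (Fintype.card F : ℝ) ^ d * ((Fintype.card F : ℝ) * (E.card : ℝ) ^ 2) := by
    rw [Finset.sum_congr rfl (fun x _ => expand x), Finset.sum_sub_distrib,
      ← Finset.mul_sum, Finset.sum_const, Finset.card_univ, nsmul_eq_mul]
    have hcard : (Fintype.card (Fin d → F) : ℝ) = (Fintype.card F : ℝ) ^ d := by
      rw [Fintype.card_fun]
      push_cast
      simp
    rw [hcard]
  have hP : (Fintype.card F : ℝ) ^ d = (Fintype.card F : ℝ) ^ (d - 1) * (Fintype.card F : ℝ) := by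
    rw [← pow_succ]
    congr 1
    omega
  have hP2 : (Fintype.card F : ℝ) ^ (d + 2)
      = (Fintype.card F : ℝ) ^ (d - 1) * (Fintype.card F : ℝ) ^ 3 := by
    rw [← pow_add]
    congr 1
    omega
  have hTupper : ∑ x : Fin d → F, ∑ s : F, ((Fintype.card F : ℝ) *
        ((E.filter (fun z => ∑ j, (x j - z j) ^ 2 = s)).card : ℝ) - (E.card : ℝ)) ^ 2
      ≤ (Fintype.card F : ℝ) ^ (d + 2) * (E.card : ℝ) := by
    rw [hT]
    have step : (Fintype.card F : ℝ) ^ 2 * (∑ x : Fin d → F, ∑ s : F,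
          ((E.filter (fun z => ∑ j, (x j - z j) ^ 2 = s)).card : ℝ) ^ 2)
        ≤ (Fintype.card F : ℝ) ^ 2 * ((E.card : ℝ) * (Fintype.card F : ℝ) ^ d
          + (E.card : ℝ) ^ 2 * (Fintype.card F : ℝ) ^ (d - 1)) :=
      mul_le_mul_of_nonneg_left hsqR (by positivity)
    have heq : (Fintype.card F : ℝ) ^ 2 * ((E.card : ℝ) * (Fintype.card F : ℝ) ^ d
          + (E.card : ℝ) ^ 2 * (Fintype.card F : ℝ) ^ (d - 1))
        - (Fintype.card F : ℝ) ^ d * ((Fintype.card F : ℝ) * (E.card : ℝ) ^ 2)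
        = (Fintype.card F : ℝ) ^ (d + 2) * (E.card : ℝ) := by
      rw [hP, hP2]
      ring
    linarith
  have hterm : ∀ x ∈ E, ((E.card : ℝ) - (Fintype.card F : ℝ) * (k : ℝ)) ^ 2
      ≤ ∑ s : F, ((Fintype.card F : ℝ) *
          ((E.filter (fun z => ∑ j, (x j - z j) ^ 2 = s)).card : ℝ) - (E.card : ℝ)) ^ 2 := by
    intro x hx
    obtain ⟨s, hs⟩ := hcon x hx
    have hqn : (Fintype.card F : ℝ) *
        ((E.filter (fun z => ∑ j, (x j - z j) ^ 2 = s)).card : ℝ)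
        ≤ (Fintype.card F : ℝ) * (k : ℝ) := by
      apply mul_le_mul_of_nonneg_left _ (le_of_lt hq0)
      exact_mod_cast hs
    have hqk : (Fintype.card F : ℝ) * (k : ℝ) < (E.card : ℝ) := by
      nlinarith [Nat.cast_nonneg (α := ℝ) k]
    have h1 : ((E.card : ℝ) - (Fintype.card F : ℝ) * (k : ℝ)) ^ 2
        ≤ ((Fintype.card F : ℝ) *
            ((E.filter (fun z => ∑ j, (x j - z j) ^ 2 = s)).card : ℝ) - (E.card : ℝ)) ^ 2 := by
      nlinarith
    calc ((E.card : ℝ) - (Fintype.card F : ℝ) * (k : ℝ)) ^ 2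
        ≤ ((Fintype.card F : ℝ) *
            ((E.filter (fun z => ∑ j, (x j - z j) ^ 2 = s)).card : ℝ) - (E.card : ℝ)) ^ 2 := h1
      _ ≤ ∑ s : F, ((Fintype.card F : ℝ) *
            ((E.filter (fun z => ∑ j, (x j - z j) ^ 2 = s)).card : ℝ) - (E.card : ℝ)) ^ 2 :=
          Finset.single_le_sum
            (f := fun s' => ((Fintype.card F : ℝ) *
              ((E.filter (fun z => ∑ j, (x j - z j) ^ 2 = s')).card : ℝ) - (E.card : ℝ)) ^ 2)
            (fun s' _ => sq_nonneg _) (Finset.mem_univ s)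
  have hTlower : (E.card : ℝ) * ((E.card : ℝ) - (Fintype.card F : ℝ) * (k : ℝ)) ^ 2
      ≤ ∑ x : Fin d → F, ∑ s : F, ((Fintype.card F : ℝ) *
          ((E.filter (fun z => ∑ j, (x j - z j) ^ 2 = s)).card : ℝ) - (E.card : ℝ)) ^ 2 := by
    calc (E.card : ℝ) * ((E.card : ℝ) - (Fintype.card F : ℝ) * (k : ℝ)) ^ 2
        = ∑ _x ∈ E, ((E.card : ℝ) - (Fintype.card F : ℝ) * (k : ℝ)) ^ 2 := by
          rw [Finset.sum_const, nsmul_eq_mul]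
      _ ≤ ∑ x ∈ E, ∑ s : F, ((Fintype.card F : ℝ) *
            ((E.filter (fun z => ∑ j, (x j - z j) ^ 2 = s)).card : ℝ) - (E.card : ℝ)) ^ 2 :=
          Finset.sum_le_sum hterm
      _ ≤ _ := Finset.sum_le_sum_of_subset_of_nonneg (Finset.subset_univ E)
          (fun x _ _ => Finset.sum_nonneg (fun s _ => sq_nonneg _))
  have hsqle : ((E.card : ℝ) - (Fintype.card F : ℝ) * (k : ℝ)) ^ 2
      ≤ (Fintype.card F : ℝ) ^ (d + 2) := by
    have := le_trans hTlower hTupper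
    nlinarith
  have hA2 : ((Fintype.card F : ℝ) ^ (((d : ℝ) + 3) / 2)) ^ 2
      = (Fintype.card F : ℝ) ^ (d + 3) := by
    rw [← Real.rpow_natCast ((Fintype.card F : ℝ) ^ (((d : ℝ) + 3) / 2)) 2,
      ← Real.rpow_mul (le_of_lt hq0)]
    have harith : ((d : ℝ) + 3) / 2 * ((2 : ℕ) : ℝ) = ((d + 3 : ℕ) : ℝ) := by
      push_cast
      ring
    rw [harith, Real.rpow_natCast]
  have hpow3 : (Fintype.card F : ℝ) ^ (d + 3)
      = (Fintype.card F : ℝ) ^ (d + 2) * (Fintype.card F : ℝ) := by rw [← pow_succ]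
  have hppos : (0 : ℝ) < (Fintype.card F : ℝ) ^ (d + 2) := by positivity
  have e1 : 11 * ((Fintype.card F : ℝ) ^ (((d : ℝ) + 3) / 2))
      < (E.card : ℝ) - (Fintype.card F : ℝ) * (k : ℝ) := by linarith
  nlinarith [e1, hA, hsqle, hA2, hpow3, hppos, hq1le]


lemma pick_injective {α : Type} [DecidableEq α] {k : ℕ} (S : Fin k → Finset α)
    (hS : ∀ i, k < (S i).card) :
    ∃ f : Fin k → α, Function.Injective f ∧ ∀ i, f i ∈ S i := by
  apply (Finset.all_card_le_biUnion_card_iff_exists_injective S).mp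
  intro s
  rcases s.eq_empty_or_nonempty with h | ⟨i, hi⟩
  · simp [h]
  · have h1 : s.card ≤ k := by
      calc s.card ≤ (Finset.univ : Finset (Fin k)).card :=
            Finset.card_le_card (Finset.subset_univ s)
        _ = k := by simp
    have hki : k < (S i).card := hS i
    have h3 : (S i).card ≤ (s.biUnion S).card :=
      Finset.card_le_card (Finset.subset_biUnion_of_mem S hi)
    omega


theorem statement4 {F : Type} [Field F] [Fintype F] [DecidableEq F]
    (q : ℕ) (hq : Fintype.card F = q) (hodd : Odd q)
    (d : ℕ) (hd : 2 ≤ d) (k : ℕ)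
    (E : Finset (Fin d → F))
    (hE : 12 * (q : ℝ) ^ (((d : ℝ) + 3) / 2) < (E.card : ℝ))
    (hk : (k : ℝ) < (E.card : ℝ) / (12 * (q : ℝ)))
    (t : Fin k → F) (ht : ∀ i, t i ≠ 0) :
    ∃ x ∈ E, ∃ y : Fin k → (Fin d → F),
      Function.Injective y ∧ (∀ i, y i ∈ E) ∧
        ∀ i : Fin k, ∑ j, (x j - y i j) ^ 2 = t i := by
  subst hq
  have hd1 : 1 ≤ d := le_trans one_le_two hd
  have hchar : ringChar F ≠ 2 := by
    intro h
    have hmod := FiniteField.even_card_of_char_two h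
    have : Fintype.card F % 2 = 1 := Nat.odd_iff.mp hodd
    omega
  have h2 : (2 : F) ≠ 0 := Ring.two_ne_zero hchar
  obtain ⟨x, hxE, hbig⟩ := claim_aux hd1 h2 k E hE hk
  have htest : ∀ i : Fin k, k < (E.filter (fun z => ∑ j, (x j - z j) ^ 2 = t i)).card :=
    fun i => hbig (t i)
  obtain ⟨f, hfinj, hf⟩ := pick_injective _ htest
  exact ⟨x, hxE, f, hfinj, fun i => (Finset.mem_filter.mp (hf i)).1,
    fun i => (Finset.mem_filter.mp (hf i)).2⟩
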